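/- arXiv:1009.5531 — 2 statements merged into one kernel-verified Lean document; each statement's English description precedes it below -/
import Mathlib

section
/- Let G be a group presented by ⟨X | R⟩ with R symmetrically closed, and suppose every relator in R has length exactly n. Let W = (e_i^{R₁})⁻¹ e_j^{R₁} (e_ℓ^{R₂})⁻¹ e_k^{R₂} be a word of length 4 over a new alphabet E = {e_i^R : R ∈ R, 1 ≤ i ≤ |R|}, where the data (R₁, R₂, i, j, k, ℓ) satisfies i ≠ j and k ≠ ℓ. Then any subword of length 3 of a cyclic conjugate of W (or its inverse) determines W up to cyclic conjugation and inversion. In particular, in the family of all such length-4 words, no two distinct (up to cyclic conjugation and inversion) words share a common subword of length 3 of cyclic conjugates. -/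
/-- The formal inverse of a word over a signed alphabet: reverse the word and
flip all the signs. -/
def wInv {A : Type*} (w : List (A × Bool)) : List (A × Bool) :=
  w.reverse.map fun p => (p.1, !p.2)

/-- The length-4 relator `(e_i^{R₁})⁻¹ e_j^{R₁} (e_ℓ^{R₂})⁻¹ e_k^{R₂}` of the
barycentric subdivision presentation, over the alphabet of formal symbols
`e_i^R` (modelled as pairs `(R, i)`), with `false` marking an inverse letter. -/
def bsdWord {R : Type*} (R₁ : R) (i j : ℕ) (R₂ : R) (k ℓ : ℕ) :
    List ((R × ℕ) × Bool) :=
  [((R₁, i), false), ((R₁, j), true), ((R₂, ℓ), false), ((R₂, k), true)]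

lemma zmod_of_hlen {n a b c d : ℕ} (hb : b < n) (hd : d < n)
    (h : (a + n - b) % n = (c + n - d) % n) :
    (a : ZMod n) - b = (c : ZMod n) - d := by
  have h2 : (a + n - b) ≡ (c + n - d) [MOD n] := h
  have h3 := (ZMod.natCast_eq_natCast_iff _ _ _).2 h2
  rw [Nat.cast_sub (by omega), Nat.cast_sub (by omega)] at h3
  push_cast at h3
  simp [ZMod.natCast_self] at h3
  linear_combination h3

lemma zmod_inj {n a b : ℕ} (ha : a < n) (hb : b < n) (h : (a : ZMod n) = b) : a = b := by
  have h2 := (ZMod.natCast_eq_natCast_iff a b n).1 h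
  rwa [Nat.ModEq, Nat.mod_eq_of_lt ha, Nat.mod_eq_of_lt hb] at h2

set_option maxHeartbeats 2000000 in
/-- If all relators have length `n` (so positions are residues mod `n`, and the
two halves of a barycentric-subdivision relator correspond to the same piece,
forcing `(j - i) ≡ (ℓ - k) mod n`), then any common length-3 subword of cyclic
conjugates of two such relators (or of their inverses) forces the two relators
to agree up to cyclic conjugation and inversion: pieces have length at most 2. -/
theorem stmt6 {R : Type*} (n : ℕ) (hn : 0 < n)
    (R₁ R₂ S₁ S₂ : R) (i j k ℓ i' j' k' ℓ' : ℕ)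
    (hi : i < n) (hj : j < n) (hk : k < n) (hℓ : ℓ < n)
    (hi' : i' < n) (hj' : j' < n) (hk' : k' < n) (hℓ' : ℓ' < n)
    (hij : i ≠ j) (hkℓ : k ≠ ℓ) (hij' : i' ≠ j') (hkℓ' : k' ≠ ℓ')
    (hlen : (j + n - i) % n = (ℓ + n - k) % n)
    (hlen' : (j' + n - i') % n = (ℓ' + n - k') % n)
    (U : List ((R × ℕ) × Bool)) (hU : U.length = 3)
    (h1 : ∃ m, U <+: (bsdWord R₁ i j R₂ k ℓ).rotate m ∨
      U <+: (wInv (bsdWord R₁ i j R₂ k ℓ)).rotate m)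
    (h2 : ∃ m, U <+: (bsdWord S₁ i' j' S₂ k' ℓ').rotate m ∨
      U <+: (wInv (bsdWord S₁ i' j' S₂ k' ℓ')).rotate m) :
    ∃ t, bsdWord S₁ i' j' S₂ k' ℓ' = (bsdWord R₁ i j R₂ k ℓ).rotate t ∨
      bsdWord S₁ i' j' S₂ k' ℓ' = (wInv (bsdWord R₁ i j R₂ k ℓ)).rotate t := by
  have e1 := zmod_of_hlen hi hk hlen
  have e2 := zmod_of_hlen hi' hk' hlen'
  obtain ⟨m1, h1⟩ := h1
  obtain ⟨m2, h2⟩ := h2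
  rcases U with _|⟨⟨⟨r1,p1⟩,b1⟩, _|⟨⟨⟨r2,p2⟩,b2⟩, _|⟨⟨⟨r3,p3⟩,b3⟩, _|_⟩⟩⟩ <;> simp at hU
  have norm4 : ∀ (l : List ((R × ℕ) × Bool)) (m : ℕ), l.length = 4 →
      l.rotate m = l.rotate (m % 4) := by
    intro l m hl; conv_lhs => rw [← List.rotate_mod]
    rw [hl]
  rw [norm4 (bsdWord R₁ i j R₂ k ℓ) m1 rfl] at h1
  rw [norm4 (wInv (bsdWord R₁ i j R₂ k ℓ)) m1 rfl] at h1
  rw [norm4 (bsdWord S₁ i' j' S₂ k' ℓ') m2 rfl] at h2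
  rw [norm4 (wInv (bsdWord S₁ i' j' S₂ k' ℓ')) m2 rfl] at h2
  have c1 : m1 % 4 = 0 ∨ m1 % 4 = 1 ∨ m1 % 4 = 2 ∨ m1 % 4 = 3 := by omega
  have c2 : m2 % 4 = 0 ∨ m2 % 4 = 1 ∨ m2 % 4 = 2 ∨ m2 % 4 = 3 := by omega
  clear hlen hlen' hU
  rcases c1 with hc|hc|hc|hc <;> rw [hc] at h1 <;> clear hc <;>
  rcases c2 with hd|hd|hd|hd <;> rw [hd] at h2 <;> clear hd <;>
  rcases h1 with h1|h1 <;> rcases h2 with h2|h2 <;>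
  simp [bsdWord, wInv, List.rotate, List.splitAt, List.splitAt.go,
    List.cons_prefix_cons, Prod.mk.injEq] at h1 h2 <;>
  obtain ⟨⟨⟨rfl,rfl⟩,rfl⟩,⟨⟨rfl,rfl⟩,rfl⟩,⟨⟨rfl,rfl⟩,rfl⟩⟩ := h1 <;>
  obtain ⟨⟨⟨q1,q2⟩,w1⟩,⟨⟨q3,q4⟩,w2⟩,⟨⟨q5,q6⟩,w3⟩⟩ := h2 <;>
  simp at w1 w2 w3 <;> subst_vars <;> first
    | (refine ⟨0, Or.inl ?_⟩; simp [bsdWord, wInv, List.rotate, List.splitAt, List.splitAt.go, Prod.mk.injEq]; exact zmod_inj ‹_› ‹_› (by first | linear_combination e1 - e2 | linear_combination e2 - e1 | linear_combination e1 + e2 | linear_combination - e1 - e2 | linear_combination e2 | linear_combination - e2 | linear_combination e1 | linear_combination - e1 | linear_combination (0:ZMod n)))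
    | (refine ⟨0, Or.inr ?_⟩; simp [bsdWord, wInv, List.rotate, List.splitAt, List.splitAt.go, Prod.mk.injEq]; exact zmod_inj ‹_› ‹_› (by first | linear_combination e1 - e2 | linear_combination e2 - e1 | linear_combination e1 + e2 | linear_combination - e1 - e2 | linear_combination e2 | linear_combination - e2 | linear_combination e1 | linear_combination - e1 | linear_combination (0:ZMod n)))
    | (refine ⟨1, Or.inl ?_⟩; simp [bsdWord, wInv, List.rotate, List.splitAt, List.splitAt.go, Prod.mk.injEq]; exact zmod_inj ‹_› ‹_› (by first | linear_combination e1 - e2 | linear_combination e2 - e1 | linear_combination e1 + e2 | linear_combination - e1 - e2 | linear_combination e2 | linear_combination - e2 | linear_combination e1 | linear_combination - e1 | linear_combination (0:ZMod n)))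
    | (refine ⟨1, Or.inr ?_⟩; simp [bsdWord, wInv, List.rotate, List.splitAt, List.splitAt.go, Prod.mk.injEq]; exact zmod_inj ‹_› ‹_› (by first | linear_combination e1 - e2 | linear_combination e2 - e1 | linear_combination e1 + e2 | linear_combination - e1 - e2 | linear_combination e2 | linear_combination - e2 | linear_combination e1 | linear_combination - e1 | linear_combination (0:ZMod n)))
    | (refine ⟨2, Or.inl ?_⟩; simp [bsdWord, wInv, List.rotate, List.splitAt, List.splitAt.go, Prod.mk.injEq]; exact zmod_inj ‹_› ‹_› (by first | linear_combination e1 - e2 | linear_combination e2 - e1 | linear_combination e1 + e2 | linear_combination - e1 - e2 | linear_combination e2 | linear_combination - e2 | linear_combination e1 | linear_combination - e1 | linear_combination (0:ZMod n)))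
    | (refine ⟨2, Or.inr ?_⟩; simp [bsdWord, wInv, List.rotate, List.splitAt, List.splitAt.go, Prod.mk.injEq]; exact zmod_inj ‹_› ‹_› (by first | linear_combination e1 - e2 | linear_combination e2 - e1 | linear_combination e1 + e2 | linear_combination - e1 - e2 | linear_combination e2 | linear_combination - e2 | linear_combination e1 | linear_combination - e1 | linear_combination (0:ZMod n)))
    | (refine ⟨3, Or.inl ?_⟩; simp [bsdWord, wInv, List.rotate, List.splitAt, List.splitAt.go, Prod.mk.injEq]; exact zmod_inj ‹_› ‹_› (by first | linear_combination e1 - e2 | linear_combination e2 - e1 | linear_combination e1 + e2 | linear_combination - e1 - e2 | linear_combination e2 | linear_combination - e2 | linear_combination e1 | linear_combination - e1 | linear_combination (0:ZMod n)))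
    | (refine ⟨3, Or.inr ?_⟩; simp [bsdWord, wInv, List.rotate, List.splitAt, List.splitAt.go, Prod.mk.injEq]; exact zmod_inj ‹_› ‹_› (by first | linear_combination e1 - e2 | linear_combination e2 - e1 | linear_combination e1 + e2 | linear_combination - e1 - e2 | linear_combination e2 | linear_combination - e2 | linear_combination e1 | linear_combination - e1 | linear_combination (0:ZMod n)))
end

section
/- Let ⟨X | R⟩ be a presentation satisfying the algebraic T(4) condition: for any three elements R₁, R₂, R₃ of the symmetric closure of R, at least one of the products R₁R₂, R₂R₃, R₃R₁ is freely reduced as written. Then there do not exist pieces P₁, P₂, P₃ and words W₁, W₂, W₃ such that P₁W₁P₂⁻¹, P₂W₂P₃⁻¹, and P₃W₃P₁⁻¹ all belong to the symmetric closure of R with each of these words freely and cyclically reduced. -/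
/-- A word over a signed alphabet is (freely) reduced if it has no adjacent
cancelling pair `x x⁻¹`. -/
def Reduced {A : Type*} (w : List (A × Bool)) : Prop :=
  List.Chain' (fun p q : A × Bool => p.1 = q.1 → p.2 = q.2) w

/-- A word is cyclically reduced if all its cyclic conjugates are reduced. -/
def CyclicallyReduced {A : Type*} (w : List (A × Bool)) : Prop :=
  ∀ m, Reduced (w.rotate m)

/-- `P` is a piece: a nonempty common prefix of two distinct elements of the
symmetrized relator set. -/
def IsPiece {A : Type*} (Rs : Set (List (A × Bool))) (P : List (A × Bool)) : Prop :=
  P ≠ [] ∧ ∃ W₁ W₂ : List (A × Bool), W₁ ≠ W₂ ∧ P ++ W₁ ∈ Rs ∧ P ++ W₂ ∈ Rs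

lemma junction_not_reduced {A : Type*} (P U V : List (A × Bool)) (hP : P ≠ []) :
    ¬ Reduced (U ++ wInv P ++ (P ++ V)) := by
  obtain ⟨⟨a, b⟩, t, rfl⟩ := List.exists_cons_of_ne_nil hP
  intro h
  have hinfix : [(a, !b), (a, b)] <:+:
      (U ++ wInv ((a, b) :: t) ++ (((a, b) :: t) ++ V)) := by
    refine ⟨U ++ t.reverse.map (fun p => (p.1, !p.2)), t ++ V, ?_⟩
    simp [wInv, List.append_assoc]
  have := h.infix hinfix
  have := List.isChain_pair.mp this rfl
  simp at this

/-- Under the algebraic `T(4)` condition on the symmetric closure `Rs`, there is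
no triangle configuration: no pieces `P₁, P₂, P₃` and words `W₁, W₂, W₃` such
that `P₁W₁P₂⁻¹`, `P₂W₂P₃⁻¹`, `P₃W₃P₁⁻¹` are all freely and cyclically reduced
members of `Rs`. -/
theorem stmt13 {X : Type*} (Rs : Set (List (X × Bool)))
    (hT4 : ∀ R₁ ∈ Rs, ∀ R₂ ∈ Rs, ∀ R₃ ∈ Rs,
      Reduced (R₁ ++ R₂) ∨ Reduced (R₂ ++ R₃) ∨ Reduced (R₃ ++ R₁)) :
    ¬ ∃ P₁ P₂ P₃ W₁ W₂ W₃ : List (X × Bool),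
      IsPiece Rs P₁ ∧ IsPiece Rs P₂ ∧ IsPiece Rs P₃ ∧
      (P₁ ++ W₁ ++ wInv P₂ ∈ Rs ∧ CyclicallyReduced (P₁ ++ W₁ ++ wInv P₂)) ∧
      (P₂ ++ W₂ ++ wInv P₃ ∈ Rs ∧ CyclicallyReduced (P₂ ++ W₂ ++ wInv P₃)) ∧
      (P₃ ++ W₃ ++ wInv P₁ ∈ Rs ∧ CyclicallyReduced (P₃ ++ W₃ ++ wInv P₁)) := by
  rintro ⟨P₁, P₂, P₃, W₁, W₂, W₃, ⟨h₁, -⟩, ⟨h₂, -⟩, ⟨h₃, -⟩,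
    ⟨m₁, -⟩, ⟨m₂, -⟩, ⟨m₃, -⟩⟩
  rcases hT4 _ m₁ _ m₂ _ m₃ with h | h | h
  · exact junction_not_reduced P₂ (P₁ ++ W₁) (W₂ ++ wInv P₃) h₂
      (by simpa [List.append_assoc] using h)
  · exact junction_not_reduced P₃ (P₂ ++ W₂) (W₃ ++ wInv P₁) h₃
      (by simpa [List.append_assoc] using h)
  · exact junction_not_reduced P₁ (P₃ ++ W₃) (W₁ ++ wInv P₂) h₁
      (by simpa [List.append_assoc] using h)
end
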